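/- (Hardy-type inequality on a ball.) For n ≥ 3, R > 0, and f ∈ H¹(ℝⁿ), ∫_{|x| ≤ R} |f(x)|²/|x|² dx ≲ ∫_{|x| ≤ R} |∂_r f|² dx + ( ∫_{|x| ≤ R} |f(x)|^{2n/(n−2)} dx )^{(n−2)/n}, where ∂_r f = (x/|x|)·∇f, with implicit constant independent of R and f. -/

import Mathlib

open MeasureTheory Set Metric
open scoped RealInnerProductSpace ENNReal


/-- Weighted AM-GM helper. -/
lemma amgm_aux {u v c : ℝ} (hu : 0 ≤ u) (hv : 0 ≤ v) (hc : 0 ≤ c)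
    (hcuv : c ^ 2 = u * v) (a b : ℝ) :
    2 * (c * (|a| * |b|)) ≤ u * a ^ 2 + v * b ^ 2 := by
  have hcs : c = Real.sqrt u * Real.sqrt v := by
    rw [← Real.sqrt_mul hu, ← hcuv, Real.sqrt_sq hc]
  have h2 := two_mul_le_add_sq (Real.sqrt u * |a|) (Real.sqrt v * |b|)
  have e1 : (Real.sqrt u * |a|) ^ 2 = u * a ^ 2 := by
    rw [mul_pow, Real.sq_sqrt hu, sq_abs]
  have e2 : (Real.sqrt v * |b|) ^ 2 = v * b ^ 2 := by
    rw [mul_pow, Real.sq_sqrt hv, sq_abs]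
  have e0 : 2 * (c * (|a| * |b|)) = 2 * (Real.sqrt u * |a|) * (Real.sqrt v * |b|) := by
    rw [hcs]; ring
  rw [e0, ← e1, ← e2]; exact h2

set_option maxHeartbeats 1000000 in
/-- 1D Hardy-type inequality with weight, on `(0, R]`. -/
lemma hardy1d (n : ℕ) (hn : 3 ≤ n) {R : ℝ} (hR : 0 < R) (g g' : ℝ → ℝ)
    (hg : ∀ r, HasDerivAt g (g' r) r) (hg' : Measurable g') :
    ∫⁻ r in Ioc (0:ℝ) R, ENNReal.ofReal (r ^ (n-3) * g r ^ 2)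
      ≤ 64 * (∫⁻ r in Ioc (0:ℝ) R, ENNReal.ofReal (r ^ (n-1) * g' r ^ 2))
        + ENNReal.ofReal (32 / R ^ 2) *
            (∫⁻ r in Ioc (0:ℝ) R, ENNReal.ofReal (r ^ (n-1) * g r ^ 2)) := by
  by_cases hB : (∫⁻ r in Ioc (0:ℝ) R, ENNReal.ofReal (r ^ (n-1) * g' r ^ 2)) = ⊤
  · rw [hB]
    simp [ENNReal.mul_top]
  -- real-variable setting
  have contg : Continuous g := continuous_iff_continuousAt.2 fun x => (hg x).continuousAt
  have hn2 : (1:ℝ) ≤ (n:ℝ) - 2 := by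
    have : (3:ℝ) ≤ (n:ℝ) := by exact_mod_cast hn
    linarith
  have hn2pos : (0:ℝ) < (n:ℝ) - 2 := by linarith
  -- weight functions
  set ψ : ℝ → ℝ := fun r => (r ^ (n-2) - r ^ (n-1) / R) / ((n:ℝ) - 2) with hψdef
  set ψ' : ℝ → ℝ := fun r =>
    (((n:ℝ) - 2) * r ^ (n-3) - ((n:ℝ) - 1) * r ^ (n-2) / R) / ((n:ℝ) - 2) with hψ'def
  have contψ : Continuous ψ := by fun_prop
  have contψ' : Continuous ψ' := by fun_prop
  have hψ : ∀ r, HasDerivAt ψ (ψ' r) r := by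
    intro r
    have h1 : HasDerivAt (fun x : ℝ => x ^ (n-2)) (((n:ℝ) - 2) * r ^ (n-3)) r := by
      have := hasDerivAt_pow (n-2) r
      have hc : ((n - 2 : ℕ) : ℝ) = (n:ℝ) - 2 := by
        rw [Nat.cast_sub (by omega)]; norm_num
      have he : n - 2 - 1 = n - 3 := by omega
      rw [he, hc] at this
      exact this
    have h2 : HasDerivAt (fun x : ℝ => x ^ (n-1) / R) (((n:ℝ) - 1) * r ^ (n-2) / R) r := by
      have := (hasDerivAt_pow (n-1) r).div_const R
      have hc : ((n - 1 : ℕ) : ℝ) = (n:ℝ) - 1 := by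
        rw [Nat.cast_sub (by omega)]; norm_num
      have he : n - 1 - 1 = n - 2 := by omega
      rw [he, hc] at this
      exact this
    exact (h1.sub h2).div_const _
  -- the function for integration by parts
  set h : ℝ → ℝ := fun r => g r ^ 2 * ψ r with hhdef
  set h' : ℝ → ℝ := fun r => (2 * g r * g' r) * ψ r + g r ^ 2 * ψ' r with hh'def
  have hh : ∀ r, HasDerivAt h (h' r) r := by
    intro r
    have := ((hg r).pow 2).mul (hψ r)
    exact this.congr_deriv (by simp only [hh'def, Pi.pow_apply]; norm_num)
  -- integrability
  have IA : IntegrableOn (fun r => r ^ (n-3) * g r ^ 2) (Ioc (0:ℝ) R) := by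
    exact (Continuous.integrableOn_Ioc (by fun_prop))
  have ID : IntegrableOn (fun r => r ^ (n-1) * g r ^ 2) (Ioc (0:ℝ) R) := by
    exact (Continuous.integrableOn_Ioc (by fun_prop))
  have IE : IntegrableOn (fun r => r ^ (n-2) * g r ^ 2) (Ioc (0:ℝ) R) := by
    exact (Continuous.integrableOn_Ioc (by fun_prop))
  have measB : Measurable (fun r : ℝ => r ^ (n-1) * g' r ^ 2) := by
    exact (measurable_id.pow_const _).mul (hg'.pow_const _)
  have IB : IntegrableOn (fun r => r ^ (n-1) * g' r ^ 2) (Ioc (0:ℝ) R) := by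
    refine ⟨measB.aestronglyMeasurable, ?_⟩
    rw [hasFiniteIntegral_iff_ofReal ?_]
    · exact lt_top_iff_ne_top.2 hB
    · filter_upwards [ae_restrict_mem measurableSet_Ioc] with r hr
      have : (0:ℝ) ≤ r := hr.1.le
      positivity
  -- the pointwise bounds
  have hψbound : ∀ r ∈ Ioc (0:ℝ) R, |ψ r| ≤ 2 * r ^ (n-2) := by
    intro r hr
    have hr0 : (0:ℝ) < r := hr.1
    have hrR : r ≤ R := hr.2
    have h1 : r ^ (n-1) / R ≤ r ^ (n-2) := by
      rw [div_le_iff₀ hR]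
      calc r ^ (n-1) = r ^ (n-2) * r := by
            rw [← pow_succ]; congr 1; omega
        _ ≤ r ^ (n-2) * R := by
            exact mul_le_mul_of_nonneg_left hrR (by positivity)
    have h2 : |r ^ (n-2) - r ^ (n-1) / R| ≤ 2 * r ^ (n-2) := by
      rw [abs_le]
      constructor
      · have : (0:ℝ) ≤ r ^ (n-1) / R := by positivity
        nlinarith [pow_pos hr0 (n-2)]
      · have : (0:ℝ) ≤ r ^ (n-1) / R := by positivity
        nlinarith
    calc |ψ r| = |r ^ (n-2) - r ^ (n-1) / R| / ((n:ℝ) - 2) := by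
          rw [hψdef]; rw [abs_div, abs_of_pos hn2pos]
      _ ≤ |r ^ (n-2) - r ^ (n-1) / R| / 1 := by
          apply div_le_div_of_nonneg_left (abs_nonneg _) one_pos hn2 |>.trans_eq rfl
      _ ≤ 2 * r ^ (n-2) := by rw [div_one]; exact h2
  -- pointwise bound for the cross term
  have hcross_bd : ∀ r ∈ Ioc (0:ℝ) R,
      |(2 * g r * g' r) * ψ r| ≤ (1/8) * (r ^ (n-3) * g r ^ 2) + 32 * (r ^ (n-1) * g' r ^ 2) := by
    intro r hr
    have hr0 : (0:ℝ) < r := hr.1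
    have key : (2 * r ^ (n-2)) ^ 2 = (r ^ (n-3) / 8) * (32 * r ^ (n-1)) := by
      have : r ^ (n-3) * r ^ (n-1) = (r ^ (n-2)) ^ 2 := by
        rw [← pow_add, ← pow_mul]; congr 1; omega
      nlinarith [this]
    have am := amgm_aux (u := r ^ (n-3) / 8) (v := 32 * r ^ (n-1)) (c := 2 * r ^ (n-2))
      (by positivity) (by positivity) (by positivity) key (g r) (g' r)
    calc |(2 * g r * g' r) * ψ r| = 2 * (|ψ r| * (|g r| * |g' r|)) := by
          rw [abs_mul, abs_mul, abs_mul]; rw [abs_of_nonneg (by norm_num : (0:ℝ) ≤ 2)]; ring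
      _ ≤ 2 * ((2 * r ^ (n-2)) * (|g r| * |g' r|)) := by
          apply mul_le_mul_of_nonneg_left _ (by norm_num : (0:ℝ) ≤ 2)
          exact mul_le_mul_of_nonneg_right (hψbound r hr) (by positivity)
      _ ≤ (r ^ (n-3) / 8) * g r ^ 2 + (32 * r ^ (n-1)) * g' r ^ 2 := am
      _ = (1/8) * (r ^ (n-3) * g r ^ 2) + 32 * (r ^ (n-1) * g' r ^ 2) := by ring
  have meascross : Measurable (fun r => (2 * g r * g' r) * ψ r) := by
    exact (((measurable_const.mul contg.measurable).mul hg').mul contψ.measurable)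
  have Icross : IntegrableOn (fun r => (2 * g r * g' r) * ψ r) (Ioc (0:ℝ) R) := by
    refine Integrable.mono' ((IA.const_mul (1/8)).add (IB.const_mul 32))
      meascross.aestronglyMeasurable ?_
    filter_upwards [ae_restrict_mem measurableSet_Ioc] with r hr
    exact hcross_bd r hr
  have Iterm2 : IntegrableOn (fun r => g r ^ 2 * ψ' r) (Ioc (0:ℝ) R) := by
    exact (Continuous.integrableOn_Ioc (by fun_prop))
  -- integration by parts identity
  have hIBP : ∫ r in Ioc (0:ℝ) R, h' r = 0 := by
    have := intervalIntegral.integral_eq_sub_of_hasDerivAt (a := 0) (b := R)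
      (fun t _ => hh t) ?_
    · rw [intervalIntegral.integral_of_le hR.le] at this
      rw [this]
      have hψR : ψ R = 0 := by
        rw [hψdef]
        have : R ^ (n-1) / R = R ^ (n-2) := by
          rw [show n-1 = (n-2)+1 by omega, pow_succ, mul_div_cancel_right₀ _ hR.ne']
        simp [this]
      have hψ0 : ψ 0 = 0 := by
        rw [hψdef]
        simp [zero_pow (show n-2 ≠ 0 by omega), zero_pow (show n-1 ≠ 0 by omega)]
      simp [hhdef, hψR, hψ0]
    · rw [intervalIntegrable_iff_integrableOn_Ioc_of_le hR.le]
      exact Icross.add Iterm2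
  have hsplit : (∫ r in Ioc (0:ℝ) R, (2 * g r * g' r) * ψ r)
      + (∫ r in Ioc (0:ℝ) R, g r ^ 2 * ψ' r) = 0 := by
    rw [← integral_add Icross Iterm2]
    exact hIBP
  -- notation for the four integrals
  set A := ∫ r in Ioc (0:ℝ) R, r ^ (n-3) * g r ^ 2 with hA
  set B := ∫ r in Ioc (0:ℝ) R, r ^ (n-1) * g' r ^ 2 with hBdef
  set D := ∫ r in Ioc (0:ℝ) R, r ^ (n-1) * g r ^ 2 with hD
  set E := ∫ r in Ioc (0:ℝ) R, r ^ (n-2) * g r ^ 2 with hE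
  have hterm2 : (∫ r in Ioc (0:ℝ) R, g r ^ 2 * ψ' r)
      = A - (((n:ℝ)-1) / (((n:ℝ)-2) * R)) * E := by
    have : ∀ r : ℝ, g r ^ 2 * ψ' r
        = r ^ (n-3) * g r ^ 2 - (((n:ℝ)-1) / (((n:ℝ)-2) * R)) * (r ^ (n-2) * g r ^ 2) := by
      intro r
      rw [hψ'def]
      field_simp
    rw [integral_congr_ae (ae_of_all _ this), integral_sub IA (IE.const_mul _),
      integral_const_mul]
  -- bound |∫ cross|
  have hcrossint : |∫ r in Ioc (0:ℝ) R, (2 * g r * g' r) * ψ r| ≤ (1/8) * A + 32 * B := by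
    calc |∫ r in Ioc (0:ℝ) R, (2 * g r * g' r) * ψ r|
        ≤ ∫ r in Ioc (0:ℝ) R, |(2 * g r * g' r) * ψ r| := by
          have := norm_integral_le_integral_norm (μ := volume.restrict (Ioc (0:ℝ) R))
            (fun r => (2 * g r * g' r) * ψ r)
          simpa only [Real.norm_eq_abs] using this
      _ ≤ ∫ r in Ioc (0:ℝ) R, ((1/8) * (r ^ (n-3) * g r ^ 2) + 32 * (r ^ (n-1) * g' r ^ 2)) := by
          refine integral_mono_ae Icross.abs ((IA.const_mul (1/8)).add (IB.const_mul 32)) ?_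
          filter_upwards [ae_restrict_mem measurableSet_Ioc] with r hr
          exact hcross_bd r hr
      _ = (1/8) * A + 32 * B := by
          rw [integral_add (IA.const_mul (1/8)) (IB.const_mul 32),
            integral_const_mul, integral_const_mul]
  -- bound the E-term
  have hEterm : (((n:ℝ)-1) / (((n:ℝ)-2) * R)) * E ≤ (1/16) * A + (16 / R ^ 2) * D := by
    have hK : ((n:ℝ)-1) / (((n:ℝ)-2) * R) ≤ 2 / R := by
      rw [div_le_div_iff₀ (by positivity) hR]
      nlinarith
    have hE_nonneg : 0 ≤ E := by
      refine setIntegral_nonneg measurableSet_Ioc fun r hr => ?_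
      have : (0:ℝ) ≤ r := hr.1.le
      positivity
    have step1 : (((n:ℝ)-1) / (((n:ℝ)-2) * R)) * E ≤ (2 / R) * E :=
      mul_le_mul_of_nonneg_right hK hE_nonneg
    have step2 : (2 / R) * E ≤ (1/16) * A + (16 / R ^ 2) * D := by
      have hpt : ∀ r ∈ Ioc (0:ℝ) R, (2 / R) * (r ^ (n-2) * g r ^ 2)
          ≤ (1/16) * (r ^ (n-3) * g r ^ 2) + (16 / R ^ 2) * (r ^ (n-1) * g r ^ 2) := by
        intro r hr
        have hr0 : (0:ℝ) < r := hr.1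
        have key : (r ^ (n-2) / R) ^ 2 = (r ^ (n-3) / 16) * (16 * r ^ (n-1) / R ^ 2) := by
          have : r ^ (n-3) * r ^ (n-1) = (r ^ (n-2)) ^ 2 := by
            rw [← pow_add, ← pow_mul]; congr 1; omega
          field_simp
          nlinarith [this]
        have am := amgm_aux (u := r ^ (n-3) / 16) (v := 16 * r ^ (n-1) / R ^ 2)
          (c := r ^ (n-2) / R) (by positivity) (by positivity) (by positivity) key (g r) (g r)
        calc (2 / R) * (r ^ (n-2) * g r ^ 2)
            = 2 * ((r ^ (n-2) / R) * (|g r| * |g r|)) := by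
              rw [abs_mul_abs_self]; ring
          _ ≤ (r ^ (n-3) / 16) * g r ^ 2 + (16 * r ^ (n-1) / R ^ 2) * g r ^ 2 := am
          _ = (1/16) * (r ^ (n-3) * g r ^ 2) + (16 / R ^ 2) * (r ^ (n-1) * g r ^ 2) := by ring
      calc (2 / R) * E = ∫ r in Ioc (0:ℝ) R, (2 / R) * (r ^ (n-2) * g r ^ 2) := by
            rw [integral_const_mul]
        _ ≤ ∫ r in Ioc (0:ℝ) R,
              ((1/16) * (r ^ (n-3) * g r ^ 2) + (16 / R ^ 2) * (r ^ (n-1) * g r ^ 2)) := by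
            refine integral_mono_ae (IE.const_mul _) ((IA.const_mul _).add (ID.const_mul _)) ?_
            filter_upwards [ae_restrict_mem measurableSet_Ioc] with r hr
            exact hpt r hr
        _ = (1/16) * A + (16 / R ^ 2) * D := by
            rw [integral_add ((IA.const_mul _)) ((ID.const_mul _)),
              integral_const_mul, integral_const_mul]
    exact step1.trans step2
  -- combine the real inequalities
  have hB_nonneg : 0 ≤ B := by
    refine setIntegral_nonneg measurableSet_Ioc fun r hr => ?_
    have : (0:ℝ) ≤ r := hr.1.le
    positivity
  have hD_nonneg : 0 ≤ D := by
    refine setIntegral_nonneg measurableSet_Ioc fun r hr => ?_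
    have : (0:ℝ) ≤ r := hr.1.le
    positivity
  have hmain : A ≤ 64 * B + (32 / R ^ 2) * D := by
    have hid : A = (((n:ℝ)-1) / (((n:ℝ)-2) * R)) * E
        - (∫ r in Ioc (0:ℝ) R, (2 * g r * g' r) * ψ r) := by
      have := hsplit
      rw [hterm2] at this
      linarith
    have h1 : A ≤ (1/16) * A + (16 / R ^ 2) * D + ((1/8) * A + 32 * B) := by
      rw [hid]
      have := neg_abs_le (∫ r in Ioc (0:ℝ) R, (2 * g r * g' r) * ψ r)
      linarith [hEterm, hcrossint]
    have hR2 : (0:ℝ) < R ^ 2 := by positivity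
    have hDR : 0 ≤ D / R ^ 2 := div_nonneg hD_nonneg hR2.le
    have h16 : (16 / R ^ 2) * D = 16 * (D / R ^ 2) := by ring
    have h32 : (32 / R ^ 2) * D = 32 * (D / R ^ 2) := by ring
    rw [h32]
    rw [h16] at h1
    linarith
  -- convert to ENNReal
  have hLHS : (∫⁻ r in Ioc (0:ℝ) R, ENNReal.ofReal (r ^ (n-3) * g r ^ 2)) = ENNReal.ofReal A := by
    rw [← ofReal_integral_eq_lintegral_ofReal IA ?_]
    filter_upwards [ae_restrict_mem measurableSet_Ioc] with r hr
    have : (0:ℝ) ≤ r := hr.1.le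
    positivity
  have hB' : (∫⁻ r in Ioc (0:ℝ) R, ENNReal.ofReal (r ^ (n-1) * g' r ^ 2)) = ENNReal.ofReal B := by
    rw [← ofReal_integral_eq_lintegral_ofReal IB ?_]
    filter_upwards [ae_restrict_mem measurableSet_Ioc] with r hr
    have : (0:ℝ) ≤ r := hr.1.le
    positivity
  have hD' : (∫⁻ r in Ioc (0:ℝ) R, ENNReal.ofReal (r ^ (n-1) * g r ^ 2)) = ENNReal.ofReal D := by
    rw [← ofReal_integral_eq_lintegral_ofReal ID ?_]
    filter_upwards [ae_restrict_mem measurableSet_Ioc] with r hr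
    have : (0:ℝ) ≤ r := hr.1.le
    positivity
  rw [hLHS, hB', hD']
  calc ENNReal.ofReal A ≤ ENNReal.ofReal (64 * B + (32 / R ^ 2) * D) :=
        ENNReal.ofReal_le_ofReal hmain
    _ ≤ ENNReal.ofReal (64 * B) + ENNReal.ofReal ((32 / R ^ 2) * D) :=
        ENNReal.ofReal_add_le
    _ = 64 * ENNReal.ofReal B + ENNReal.ofReal (32 / R ^ 2) * ENNReal.ofReal D := by
        rw [ENNReal.ofReal_mul (by norm_num : (0:ℝ) ≤ 64),
          ENNReal.ofReal_mul (by positivity : (0:ℝ) ≤ 32 / R ^ 2)]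
        norm_num


lemma polar_lintegral (n : ℕ) (hn : 1 ≤ n) (F : EuclideanSpace ℝ (Fin n) → ℝ≥0∞)
    (hF : Measurable F) :
    ∫⁻ x, F x ∂(volume : Measure (EuclideanSpace ℝ (Fin n)))
      = ∫⁻ ω : sphere (0 : EuclideanSpace ℝ (Fin n)) 1,
          ∫⁻ r in Ioi (0:ℝ), ENNReal.ofReal (r ^ (n-1)) * F (r • (ω : EuclideanSpace ℝ (Fin n)))
            ∂volume ∂((volume : Measure (EuclideanSpace ℝ (Fin n))).toSphere) := by
  haveI hnt : Nontrivial (EuclideanSpace ℝ (Fin n)) := by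
    have : 0 < Module.finrank ℝ (EuclideanSpace ℝ (Fin n)) := by
      rw [finrank_euclideanSpace_fin]; omega
    exact Module.nontrivial_of_finrank_pos this
  have hdim : Module.finrank ℝ (EuclideanSpace ℝ (Fin n)) = n := finrank_euclideanSpace_fin
  set μ : Measure (EuclideanSpace ℝ (Fin n)) := volume with hμ
  -- restrict to the complement of 0, pass to the subtype
  have h0 : (∫⁻ x, F x ∂μ)
      = ∫⁻ x : ({0}ᶜ : Set (EuclideanSpace ℝ (Fin n))), F x ∂(μ.comap Subtype.val) := by
    rw [lintegral_subtype_comap (measurableSet_singleton (0:EuclideanSpace ℝ (Fin n))).compl,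
      restrict_compl_singleton]
  -- apply the measure-preserving polar homeomorphism
  have hmp := (μ.measurePreserving_homeomorphUnitSphereProd)
  set G : (sphere (0 : EuclideanSpace ℝ (Fin n)) 1 × Ioi (0:ℝ)) → ℝ≥0∞ :=
    fun p => F ((p.2 : ℝ) • (p.1 : EuclideanSpace ℝ (Fin n))) with hG
  have hGmeas : Measurable G := by
    apply hF.comp
    exact (measurable_subtype_coe.comp measurable_snd).smul
      (measurable_subtype_coe.comp measurable_fst)
  have h1 : (∫⁻ x : ({0}ᶜ : Set (EuclideanSpace ℝ (Fin n))), F x ∂(μ.comap Subtype.val))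
      = ∫⁻ p, G p ∂(μ.toSphere.prod (Measure.volumeIoiPow (n-1))) := by
    rw [hdim] at hmp
    rw [← hmp.lintegral_comp_emb (Homeomorph.measurableEmbedding _) G]
    refine lintegral_congr fun x => ?_
    have hx : (x : EuclideanSpace ℝ (Fin n)) ≠ 0 := x.2
    simp only [hG, homeomorphUnitSphereProd_apply_fst_coe, homeomorphUnitSphereProd_apply_snd_coe]
    rw [smul_inv_smul₀ (norm_ne_zero_iff.2 hx)]
  have h2 : (∫⁻ p, G p ∂(μ.toSphere.prod (Measure.volumeIoiPow (n-1))))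
      = ∫⁻ ω : sphere (0 : EuclideanSpace ℝ (Fin n)) 1,
          ∫⁻ r : Ioi (0:ℝ), G (ω, r) ∂(Measure.volumeIoiPow (n-1)) ∂μ.toSphere := by
    exact lintegral_prod G hGmeas.aemeasurable
  rw [h0, h1, h2]
  refine lintegral_congr fun ω => ?_
  -- inner integral over (0, ∞)
  have hd : Measurable (fun r : Ioi (0:ℝ) => ENNReal.ofReal ((r : ℝ) ^ (n-1))) :=
    (measurable_subtype_coe.pow_const _).ennreal_ofReal
  have hGω : Measurable (fun r : Ioi (0:ℝ) => G (ω, r)) :=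
    hGmeas.comp measurable_prodMk_left
  have step : (∫⁻ r : Ioi (0:ℝ), G (ω, r) ∂(Measure.volumeIoiPow (n-1)))
      = ∫⁻ r : Ioi (0:ℝ),
          (fun t : ℝ => ENNReal.ofReal (t ^ (n-1)) * F (t • (ω : EuclideanSpace ℝ (Fin n)))) (r : ℝ)
          ∂(Measure.comap Subtype.val volume) := by
    rw [Measure.volumeIoiPow, lintegral_withDensity_eq_lintegral_mul _ ?_ hGω]
    · rfl
    · exact hd
  rw [step]
  exact lintegral_subtype_comap measurableSet_Ioi
    (fun t : ℝ => ENNReal.ofReal (t ^ (n-1)) * F (t • (ω : EuclideanSpace ℝ (Fin n))))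

lemma polar_ball (n : ℕ) (hn : 1 ≤ n) {R : ℝ} (hR : 0 < R)
    (G : EuclideanSpace ℝ (Fin n) → ℝ≥0∞) (hG : Measurable G) :
    ∫⁻ x in Metric.closedBall (0 : EuclideanSpace ℝ (Fin n)) R, G x
      = ∫⁻ ω : sphere (0 : EuclideanSpace ℝ (Fin n)) 1,
          ∫⁻ r in Ioc (0:ℝ) R, ENNReal.ofReal (r ^ (n-1)) * G (r • (ω : EuclideanSpace ℝ (Fin n)))
            ∂volume ∂((volume : Measure (EuclideanSpace ℝ (Fin n))).toSphere) := by
  rw [← lintegral_indicator measurableSet_closedBall]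
  rw [polar_lintegral n hn _ (hG.indicator measurableSet_closedBall)]
  refine lintegral_congr fun ω => ?_
  have hω : ‖(ω : EuclideanSpace ℝ (Fin n))‖ = 1 := by
    have := ω.2
    rwa [mem_sphere_iff_norm, sub_zero] at this
  have key : ∀ r ∈ Ioi (0:ℝ),
      ENNReal.ofReal (r ^ (n-1))
          * (Metric.closedBall (0 : EuclideanSpace ℝ (Fin n)) R).indicator G
            (r • (ω : EuclideanSpace ℝ (Fin n)))
        = (Iic R).indicator
            (fun t : ℝ => ENNReal.ofReal (t ^ (n-1)) * G (t • (ω : EuclideanSpace ℝ (Fin n)))) r := by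
    intro r hr
    have hmem : (r • (ω : EuclideanSpace ℝ (Fin n)) ∈ Metric.closedBall (0:EuclideanSpace ℝ (Fin n)) R)
        ↔ r ∈ Iic R := by
      rw [Metric.mem_closedBall, dist_zero_right, norm_smul, hω, mul_one, Real.norm_eq_abs,
        abs_of_pos hr]
      exact Iff.rfl
    by_cases hrR : r ∈ Iic R
    · rw [Set.indicator_of_mem (hmem.2 hrR), Set.indicator_of_mem hrR]
    · rw [Set.indicator_of_notMem (fun hc => hrR (hmem.1 hc)), Set.indicator_of_notMem hrR,
        mul_zero]
  rw [setLIntegral_congr_fun measurableSet_Ioi key]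
  rw [lintegral_indicator measurableSet_Iic, Measure.restrict_restrict measurableSet_Iic]
  rw [Set.inter_comm, Set.Ioi_inter_Iic]


lemma sq_nnnorm_real (a : ℝ) : (‖a‖₊ : ℝ≥0∞) ^ 2 = ENNReal.ofReal (a ^ 2) := by
  rw [← enorm_eq_nnnorm, ← ofReal_norm, ← ENNReal.ofReal_pow (norm_nonneg a),
    Real.norm_eq_abs, sq_abs]

theorem stmt_13 (n : ℕ) (hn : 3 ≤ n) :
    ∃ C : ℝ, 0 < C ∧ ∀ R : ℝ, 0 < R →
      ∀ f : EuclideanSpace ℝ (Fin n) → ℝ, Differentiable ℝ f →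
        MemLp f 2 volume → MemLp (fun x => gradient f x) 2 volume →
        (∫⁻ x in Metric.closedBall (0 : EuclideanSpace ℝ (Fin n)) R,
            (‖f x‖₊ : ℝ≥0∞) ^ 2 / (‖x‖₊ : ℝ≥0∞) ^ 2)
          ≤ ENNReal.ofReal C *
            ((∫⁻ x in Metric.closedBall (0 : EuclideanSpace ℝ (Fin n)) R,
                (‖⟪‖x‖⁻¹ • x, gradient f x⟫‖₊ : ℝ≥0∞) ^ 2)
              + (∫⁻ x in Metric.closedBall (0 : EuclideanSpace ℝ (Fin n)) R,
                  (‖f x‖₊ : ℝ≥0∞) ^ ((2 * (n : ℝ)) / ((n : ℝ) - 2)))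
                ^ (((n : ℝ) - 2) / (n : ℝ))) := by
  have hn1 : 1 ≤ n := by omega
  have hnR : (3:ℝ) ≤ (n:ℝ) := by exact_mod_cast hn
  set c₀ : ℝ≥0∞ :=
    (volume (Metric.ball (0 : EuclideanSpace ℝ (Fin n)) 1)) ^ ((2:ℝ)/(n:ℝ)) with hc₀
  have hc₀top : c₀ ≠ ⊤ :=
    ENNReal.rpow_ne_top_of_nonneg (by positivity) measure_ball_lt_top.ne
  refine ⟨64 * max 1 c₀.toReal, by positivity, ?_⟩
  intro R hR f hf _ _
  have hfc : Continuous f := hf.continuous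
  have hgradmeas : Measurable (fun x : EuclideanSpace ℝ (Fin n) => gradient f x) := by
    have heq : (fun x : EuclideanSpace ℝ (Fin n) => gradient f x)
        = fun x => (InnerProductSpace.toDual ℝ (EuclideanSpace ℝ (Fin n))).symm (fderiv ℝ f x) :=
      rfl
    rw [heq]
    exact (LinearIsometryEquiv.continuous _).measurable.comp (measurable_fderiv ℝ f)
  -- the three integrands
  set G₀ : EuclideanSpace ℝ (Fin n) → ℝ≥0∞ :=
    fun x => (‖f x‖₊ : ℝ≥0∞) ^ 2 / (‖x‖₊ : ℝ≥0∞) ^ 2 with hG₀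
  set G₁ : EuclideanSpace ℝ (Fin n) → ℝ≥0∞ :=
    fun x => (‖⟪‖x‖⁻¹ • x, gradient f x⟫‖₊ : ℝ≥0∞) ^ 2 with hG₁
  set G₂ : EuclideanSpace ℝ (Fin n) → ℝ≥0∞ :=
    fun x => (‖f x‖₊ : ℝ≥0∞) ^ 2 with hG₂
  have hG₀meas : Measurable G₀ := by
    apply Measurable.div
    · exact (hfc.measurable.nnnorm.coe_nnreal_ennreal).pow_const 2
    · exact (measurable_nnnorm.coe_nnreal_ennreal).pow_const 2
  have hradmeas : Measurable (fun x : EuclideanSpace ℝ (Fin n) => ‖x‖⁻¹ • x) :=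
    (measurable_norm.inv).smul measurable_id
  have hG₁meas : Measurable G₁ := by
    exact (((hradmeas.inner hgradmeas).nnnorm).coe_nnreal_ennreal).pow_const 2
  have hG₂meas : Measurable G₂ :=
    (hfc.measurable.nnnorm.coe_nnreal_ennreal).pow_const 2
  -- per-direction derivative data
  set g : sphere (0 : EuclideanSpace ℝ (Fin n)) 1 → ℝ → ℝ :=
    fun ω r => f (r • (ω : EuclideanSpace ℝ (Fin n))) with hg_def
  set g' : sphere (0 : EuclideanSpace ℝ (Fin n)) 1 → ℝ → ℝ :=
    fun ω r => ⟪(ω : EuclideanSpace ℝ (Fin n)),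
      gradient f (r • (ω : EuclideanSpace ℝ (Fin n)))⟫ with hg'_def
  have hωnorm : ∀ ω : sphere (0 : EuclideanSpace ℝ (Fin n)) 1,
      ‖(ω : EuclideanSpace ℝ (Fin n))‖ = 1 := by
    intro ω
    have := ω.2
    rwa [mem_sphere_iff_norm, sub_zero] at this
  have hderiv : ∀ (ω : sphere (0 : EuclideanSpace ℝ (Fin n)) 1) (r : ℝ),
      HasDerivAt (g ω) (g' ω r) r := by
    intro ω r
    have h1 : HasGradientAt f (gradient f (r • (ω : EuclideanSpace ℝ (Fin n))))
        (r • (ω : EuclideanSpace ℝ (Fin n))) := (hf _).hasGradientAt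
    have h2 := hasGradientAt_iff_hasFDerivAt.mp h1
    have h3 : HasDerivAt (fun t : ℝ => t • (ω : EuclideanSpace ℝ (Fin n)))
        ((ω : EuclideanSpace ℝ (Fin n))) r := by
      simpa using (hasDerivAt_id r).smul_const (ω : EuclideanSpace ℝ (Fin n))
    have h4 := h2.comp_hasDerivAt r h3
    have h5 : (InnerProductSpace.toDual ℝ (EuclideanSpace ℝ (Fin n)))
        (gradient f (r • (ω : EuclideanSpace ℝ (Fin n)))) (ω : EuclideanSpace ℝ (Fin n))
        = g' ω r := by
      rw [InnerProductSpace.toDual_apply_apply, hg'_def]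
      exact real_inner_comm _ _
    rw [← h5]
    exact h4
  have hg'meas : ∀ ω : sphere (0 : EuclideanSpace ℝ (Fin n)) 1, Measurable (g' ω) := by
    intro ω
    exact Measurable.inner measurable_const
      (hgradmeas.comp ((measurable_id.smul_const _)))
  -- pointwise identities on rays
  have hnormsmul : ∀ (ω : sphere (0 : EuclideanSpace ℝ (Fin n)) 1) {r : ℝ}, 0 < r →
      ‖r • (ω : EuclideanSpace ℝ (Fin n))‖ = r := by
    intro ω r hr
    rw [norm_smul, hωnorm ω, mul_one, Real.norm_eq_abs, abs_of_pos hr]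
  have key0 : ∀ (ω : sphere (0 : EuclideanSpace ℝ (Fin n)) 1), ∀ r ∈ Ioc (0:ℝ) R,
      ENNReal.ofReal (r ^ (n-1)) * G₀ (r • (ω : EuclideanSpace ℝ (Fin n)))
        = ENNReal.ofReal (r ^ (n-3) * g ω r ^ 2) := by
    intro ω r hr
    have hr0 : (0:ℝ) < r := hr.1
    have hnrm : (‖r • (ω : EuclideanSpace ℝ (Fin n))‖₊ : ℝ≥0∞) = ENNReal.ofReal r := by
      rw [← enorm_eq_nnnorm, ← ofReal_norm, hnormsmul ω hr0]
    rw [hG₀]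
    simp only []
    rw [hnrm, sq_nnnorm_real, ← ENNReal.ofReal_pow hr0.le, ← mul_div_assoc,
      ← ENNReal.ofReal_mul (by positivity), ← ENNReal.ofReal_div_of_pos (by positivity)]
    congr 1
    have hpow : r ^ (n-1) = r ^ (n-3) * r ^ 2 := by
      rw [← pow_add]; congr 1; omega
    rw [hg_def, hpow]
    field_simp
  have key1 : ∀ (ω : sphere (0 : EuclideanSpace ℝ (Fin n)) 1), ∀ r ∈ Ioc (0:ℝ) R,
      ENNReal.ofReal (r ^ (n-1)) * G₁ (r • (ω : EuclideanSpace ℝ (Fin n)))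
        = ENNReal.ofReal (r ^ (n-1) * g' ω r ^ 2) := by
    intro ω r hr
    have hr0 : (0:ℝ) < r := hr.1
    have hray : ‖r • (ω : EuclideanSpace ℝ (Fin n))‖⁻¹ • (r • (ω : EuclideanSpace ℝ (Fin n)))
        = (ω : EuclideanSpace ℝ (Fin n)) := by
      rw [hnormsmul ω hr0]
      exact inv_smul_smul₀ hr0.ne' _
    rw [hG₁]
    simp only []
    rw [hray, sq_nnnorm_real, ← ENNReal.ofReal_mul (by positivity)]
  have key2 : ∀ (ω : sphere (0 : EuclideanSpace ℝ (Fin n)) 1), ∀ r ∈ Ioc (0:ℝ) R,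
      ENNReal.ofReal (r ^ (n-1)) * G₂ (r • (ω : EuclideanSpace ℝ (Fin n)))
        = ENNReal.ofReal (r ^ (n-1) * g ω r ^ 2) := by
    intro ω r hr
    have hr0 : (0:ℝ) < r := hr.1
    rw [hG₂]
    simp only []
    rw [sq_nnnorm_real, ← ENNReal.ofReal_mul (by positivity)]
  -- abbreviations for the ball integrals
  set T0 := ∫⁻ x in Metric.closedBall (0 : EuclideanSpace ℝ (Fin n)) R, G₀ x with hT0
  set T1 := ∫⁻ x in Metric.closedBall (0 : EuclideanSpace ℝ (Fin n)) R, G₁ x with hT1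
  set T2 := ∫⁻ x in Metric.closedBall (0 : EuclideanSpace ℝ (Fin n)) R, G₂ x with hT2
  set T3 := ∫⁻ x in Metric.closedBall (0 : EuclideanSpace ℝ (Fin n)) R,
    (‖f x‖₊ : ℝ≥0∞) ^ ((2 * (n : ℝ)) / ((n : ℝ) - 2)) with hT3
  -- polar versions
  have hpolar0 : T0 = ∫⁻ ω : sphere (0 : EuclideanSpace ℝ (Fin n)) 1,
      ∫⁻ r in Ioc (0:ℝ) R, ENNReal.ofReal (r ^ (n-3) * g ω r ^ 2) ∂volume
      ∂((volume : Measure (EuclideanSpace ℝ (Fin n))).toSphere) := by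
    rw [hT0, polar_ball n hn1 hR G₀ hG₀meas]
    exact lintegral_congr fun ω =>
      setLIntegral_congr_fun measurableSet_Ioc (key0 ω)
  have hpolar1 : T1 = ∫⁻ ω : sphere (0 : EuclideanSpace ℝ (Fin n)) 1,
      ∫⁻ r in Ioc (0:ℝ) R, ENNReal.ofReal (r ^ (n-1) * g' ω r ^ 2) ∂volume
      ∂((volume : Measure (EuclideanSpace ℝ (Fin n))).toSphere) := by
    rw [hT1, polar_ball n hn1 hR G₁ hG₁meas]
    exact lintegral_congr fun ω =>
      setLIntegral_congr_fun measurableSet_Ioc (key1 ω)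
  have hpolar2 : T2 = ∫⁻ ω : sphere (0 : EuclideanSpace ℝ (Fin n)) 1,
      ∫⁻ r in Ioc (0:ℝ) R, ENNReal.ofReal (r ^ (n-1) * g ω r ^ 2) ∂volume
      ∂((volume : Measure (EuclideanSpace ℝ (Fin n))).toSphere) := by
    rw [hT2, polar_ball n hn1 hR G₂ hG₂meas]
    exact lintegral_congr fun ω =>
      setLIntegral_congr_fun measurableSet_Ioc (key2 ω)
  -- measurability of the inner integrals in ω
  have hsmulmeas : Measurable (fun p : (sphere (0 : EuclideanSpace ℝ (Fin n)) 1) × ℝ =>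
      p.2 • (p.1 : EuclideanSpace ℝ (Fin n))) :=
    measurable_snd.smul (measurable_subtype_coe.comp measurable_fst)
  have measI1 : Measurable (fun ω : sphere (0 : EuclideanSpace ℝ (Fin n)) 1 =>
      ∫⁻ r in Ioc (0:ℝ) R, ENNReal.ofReal (r ^ (n-1) * g' ω r ^ 2) ∂volume) := by
    apply Measurable.lintegral_prod_right
    apply Measurable.ennreal_ofReal
    apply Measurable.mul
    · exact (measurable_snd.pow_const _)
    · exact ((Measurable.inner (measurable_subtype_coe.comp measurable_fst)
        (hgradmeas.comp hsmulmeas)).pow_const 2)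
  have measI2 : Measurable (fun ω : sphere (0 : EuclideanSpace ℝ (Fin n)) 1 =>
      ∫⁻ r in Ioc (0:ℝ) R, ENNReal.ofReal (r ^ (n-1) * g ω r ^ 2) ∂volume) := by
    apply Measurable.lintegral_prod_right
    apply Measurable.ennreal_ofReal
    apply Measurable.mul
    · exact (measurable_snd.pow_const _)
    · exact ((hfc.measurable.comp hsmulmeas).pow_const 2)
  -- apply the 1D Hardy inequality and integrate over the sphere
  have hmain : T0 ≤ 64 * T1 + ENNReal.ofReal (32 / R ^ 2) * T2 := by
    rw [hpolar0, hpolar1, hpolar2]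
    calc ∫⁻ ω : sphere (0 : EuclideanSpace ℝ (Fin n)) 1,
          ∫⁻ r in Ioc (0:ℝ) R, ENNReal.ofReal (r ^ (n-3) * g ω r ^ 2) ∂volume
          ∂((volume : Measure (EuclideanSpace ℝ (Fin n))).toSphere)
        ≤ ∫⁻ ω : sphere (0 : EuclideanSpace ℝ (Fin n)) 1,
            (64 * (∫⁻ r in Ioc (0:ℝ) R, ENNReal.ofReal (r ^ (n-1) * g' ω r ^ 2) ∂volume)
              + ENNReal.ofReal (32 / R ^ 2) *
                (∫⁻ r in Ioc (0:ℝ) R, ENNReal.ofReal (r ^ (n-1) * g ω r ^ 2) ∂volume))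
            ∂((volume : Measure (EuclideanSpace ℝ (Fin n))).toSphere) := by
          exact lintegral_mono fun ω => hardy1d n hn hR (g ω) (g' ω) (hderiv ω) (hg'meas ω)
      _ = _ := by
          rw [lintegral_add_left (measI1.const_mul 64), lintegral_const_mul 64 measI1,
            lintegral_const_mul _ measI2]
  -- Hoelder inequality for the L² term on the ball
  have hconj : ((n:ℝ)/((n:ℝ)-2)).HolderConjugate ((n:ℝ)/2) := by
    rw [Real.holderConjugate_iff]
    constructor
    · rw [lt_div_iff₀ (by linarith)]
      linarith
    · rw [inv_div, inv_div]
      field_simp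
      ring
  have hHolder : T2 ≤ T3 ^ (((n:ℝ)-2)/(n:ℝ))
      * (volume (Metric.closedBall (0 : EuclideanSpace ℝ (Fin n)) R)) ^ ((2:ℝ)/(n:ℝ)) := by
    have h := ENNReal.lintegral_mul_le_Lp_mul_Lq
      (volume.restrict (Metric.closedBall (0 : EuclideanSpace ℝ (Fin n)) R)) hconj
      (f := fun x => (‖f x‖₊ : ℝ≥0∞) ^ 2) (g := fun _ => 1)
      (hG₂meas.aemeasurable) aemeasurable_const
    simp only [mul_one, Pi.mul_apply, Pi.one_apply] at h
    have e1 : ∀ x : EuclideanSpace ℝ (Fin n),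
        ((‖f x‖₊ : ℝ≥0∞) ^ 2) ^ ((n:ℝ)/((n:ℝ)-2)) = (‖f x‖₊ : ℝ≥0∞) ^ ((2 * (n:ℝ))/((n:ℝ)-2)) := by
      intro x
      rw [← ENNReal.rpow_natCast ((‖f x‖₊ : ℝ≥0∞)) 2, ← ENNReal.rpow_mul]
      norm_num
      rw [mul_div_assoc]
    have e2 : (1 : ℝ≥0∞) ^ ((n:ℝ)/2) = 1 := ENNReal.one_rpow _
    simp only [e1, e2] at h
    rw [setLIntegral_one] at h
    have e3 : 1 / ((n:ℝ)/((n:ℝ)-2)) = ((n:ℝ)-2)/(n:ℝ) := by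
      rw [one_div, inv_div]
    have e4 : 1 / ((n:ℝ)/2) = (2:ℝ)/(n:ℝ) := by
      rw [one_div, inv_div]
    rw [e3, e4] at h
    exact h
  -- compute the ball volume factor
  have hvol : (volume (Metric.closedBall (0 : EuclideanSpace ℝ (Fin n)) R)) ^ ((2:ℝ)/(n:ℝ))
      = ENNReal.ofReal (R ^ 2) * c₀ := by
    rw [Measure.addHaar_closedBall _ _ hR.le, ENNReal.mul_rpow_of_nonneg _ _ (by positivity)]
    congr 1
    rw [ENNReal.ofReal_rpow_of_pos (by positivity), finrank_euclideanSpace_fin]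
    congr 1
    rw [← Real.rpow_natCast R n, ← Real.rpow_mul hR.le]
    have hexp : (n:ℝ) * (2/(n:ℝ)) = 2 := by
      field_simp
    rw [hexp, show (2:ℝ) = ((2:ℕ):ℝ) by norm_num, Real.rpow_natCast]
  -- put things together
  have hstep : T0 ≤ 64 * T1 + (32 * c₀) * T3 ^ (((n:ℝ)-2)/(n:ℝ)) := by
    refine hmain.trans ?_
    refine add_le_add le_rfl ?_
    calc ENNReal.ofReal (32 / R ^ 2) * T2
        ≤ ENNReal.ofReal (32 / R ^ 2) * (T3 ^ (((n:ℝ)-2)/(n:ℝ)) * (ENNReal.ofReal (R ^ 2) * c₀)) := by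
          rw [← hvol]
          exact mul_le_mul_right hHolder _
      _ = (ENNReal.ofReal (32 / R ^ 2) * ENNReal.ofReal (R ^ 2)) * c₀ * T3 ^ (((n:ℝ)-2)/(n:ℝ)) := by
          ring
      _ = (32 * c₀) * T3 ^ (((n:ℝ)-2)/(n:ℝ)) := by
          rw [← ENNReal.ofReal_mul (by positivity), div_mul_cancel₀ _ (by positivity : R ^ 2 ≠ 0)]
          norm_num
  -- final constant bookkeeping
  have hMge1 : (1:ℝ≥0∞) ≤ ENNReal.ofReal (max 1 c₀.toReal) := by
    rw [← ENNReal.ofReal_one]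
    exact ENNReal.ofReal_le_ofReal (le_max_left _ _)
  have hMgec : c₀ ≤ ENNReal.ofReal (max 1 c₀.toReal) := by
    calc c₀ = ENNReal.ofReal c₀.toReal := (ENNReal.ofReal_toReal hc₀top).symm
      _ ≤ _ := ENNReal.ofReal_le_ofReal (le_max_right _ _)
  have hCsplit : ENNReal.ofReal (64 * max 1 c₀.toReal)
      = 64 * ENNReal.ofReal (max 1 c₀.toReal) := by
    rw [ENNReal.ofReal_mul (by norm_num : (0:ℝ) ≤ 64)]
    norm_num
  refine hstep.trans ?_
  rw [hCsplit, mul_add]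
  refine add_le_add ?_ ?_
  · calc (64:ℝ≥0∞) * T1 = 64 * 1 * T1 := by rw [mul_one]
      _ ≤ 64 * ENNReal.ofReal (max 1 c₀.toReal) * T1 := by
          exact mul_le_mul_left (mul_le_mul_right hMge1 _) _
  · calc (32 * c₀) * T3 ^ (((n:ℝ)-2)/(n:ℝ))
        ≤ (64 * ENNReal.ofReal (max 1 c₀.toReal)) * T3 ^ (((n:ℝ)-2)/(n:ℝ)) := by
          refine mul_le_mul_left ?_ _
          calc (32:ℝ≥0∞) * c₀ ≤ 32 * ENNReal.ofReal (max 1 c₀.toReal) := mul_le_mul_right hMgec _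
            _ ≤ 64 * ENNReal.ofReal (max 1 c₀.toReal) := by
              exact mul_le_mul_left (by norm_num) _
      _ = _ := rfl
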